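/- Let μ be an unconditional log-concave measure on R^n, K a symmetric convex body, and u a standard basis vector. Then μ(K)·μ(K^o) ≤ μ(S_u K)·μ((S_u K)^o). -/

import Mathlib

open MeasureTheory Set Pointwise
open scoped InnerProductSpace ENNReal

noncomputable section

/-- `ℝ^n` with the Euclidean structure. -/
abbrev E (n : ℕ) := EuclideanSpace ℝ (Fin n)

/-- The polar body `K° = {y : ∀ x ∈ K, ⟨x,y⟩ ≤ 1}`. -/
def polarBody {n : ℕ} (K : Set (E n)) : Set (E n) := {y | ∀ x ∈ K, ⟪x, y⟫_ℝ ≤ 1}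

/-- A set is unconditional if it is invariant under coordinate-wise sign changes. -/
def Uncond {n : ℕ} (K : Set (E n)) : Prop :=
  ∀ x ∈ K, ∀ ε : Fin n → ℝ, (∀ i, ε i = 1 ∨ ε i = -1) →
    (WithLp.toLp 2 (fun i => ε i * x i) : E n) ∈ K

/-- A convex body: compact, convex, with nonempty interior. -/
def IsConvexBody {n : ℕ} (K : Set (E n)) : Prop :=
  IsCompact K ∧ Convex ℝ K ∧ (interior K).Nonempty

/-- The Steiner symmetral of `K` in direction `u`: over each point of `u^⊥` the fiber
`K_y` is replaced by `(K_y + (-K_y))/2`. -/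
def steiner {n : ℕ} (u : E n) (K : Set (E n)) : Set (E n) :=
  {x | ∃ s t : ℝ, (x - ⟪x, u⟫_ℝ • u + s • u) ∈ K ∧ (x - ⟪x, u⟫_ℝ • u + t • u) ∈ K ∧
    ⟪x, u⟫_ℝ = (s - t) / 2}

/-- The geometric mean body `K^{1/2} L^{1/2}`. -/
def geomMean {n : ℕ} (K L : Set (E n)) : Set (E n) :=
  {z | ∃ x ∈ K, ∃ y ∈ L, ∀ i, |z i| = |x i| ^ ((1 : ℝ) / 2) * |y i| ^ ((1 : ℝ) / 2)}

namespace BSAux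

/-- volume of an affine preimage `{x | 2x - d ∈ C}` equals half the volume. -/
lemma vol_half_preimage (d : ℝ) (C : Set ℝ) (hC : MeasurableSet C) :
    volume {x : ℝ | 2 * x - d ∈ C} = volume C / 2 := by
  have hm : Measurable fun x : ℝ => 2 * x - d :=
    (measurable_const_mul 2).sub measurable_const
  have hmap : Measure.map (fun x : ℝ => 2 * x - d) volume
      = ENNReal.ofReal |(2:ℝ)⁻¹| • volume := by
    have h1 : (fun x : ℝ => 2 * x - d) = (fun x : ℝ => x + (-d)) ∘ (fun x : ℝ => 2 * x) := by
      funext x; simp [sub_eq_add_neg]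
    rw [h1, ← Measure.map_map (by fun_prop) (by fun_prop),
      Real.map_volume_mul_left (by norm_num : (2:ℝ) ≠ 0), Measure.map_smul,
      map_add_right_eq_self]
  have := Measure.map_apply (μ := volume) hm hC
  rw [hmap] at this
  have h2 : {x : ℝ | 2 * x - d ∈ C} = (fun x : ℝ => 2 * x - d) ⁻¹' C := rfl
  rw [h2, ← this]
  simp only [Measure.smul_apply, smul_eq_mul]
  rw [abs_of_pos (by norm_num : (0:ℝ) < (2:ℝ)⁻¹)]
  rw [ENNReal.ofReal_inv_of_pos (by norm_num : (0:ℝ) < 2)]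
  rw [ENNReal.div_eq_inv_mul]
  norm_num

/-- 1-D "midpoint Brunn-Minkowski": if S contains all midpoints of A and B then
`vol A / 2 + vol B / 2 ≤ vol S`. -/
lemma vol_midpoints (A B S : Set ℝ) (hA : MeasurableSet A) (hB : MeasurableSet B)
    (hS : MeasurableSet S) (hAne : A.Nonempty) (hBne : B.Nonempty)
    (hsub : ∀ a ∈ A, ∀ b ∈ B, (a + b) / 2 ∈ S) :
    volume A / 2 + volume B / 2 ≤ volume S := by
  -- reduce to compact subsets
  have key : ∀ CA ⊆ A, ∀ CB ⊆ B, IsCompact CA → IsCompact CB →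
      volume CA / 2 + volume CB / 2 ≤ volume S := by
    intro CA hCA CB hCB hcA hcB
    rcases CA.eq_empty_or_nonempty with h | hCAne
    · subst h
      simp only [measure_empty, ENNReal.zero_div, zero_add]
      obtain ⟨a₀, ha₀⟩ := hAne
      have hsub2 : {x : ℝ | 2 * x - a₀ ∈ CB} ⊆ S := by
        intro x hx
        have : (a₀ + (2 * x - a₀)) / 2 ∈ S := hsub a₀ ha₀ _ (hCB hx)
        convert this using 2; ring
      calc volume CB / 2 = volume {x : ℝ | 2 * x - a₀ ∈ CB} :=
            (vol_half_preimage a₀ CB hcB.measurableSet).symm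
        _ ≤ volume S := measure_mono hsub2
    rcases CB.eq_empty_or_nonempty with h | hCBne
    · subst h
      simp only [measure_empty, ENNReal.zero_div, add_zero]
      obtain ⟨b₀, hb₀⟩ := hBne
      have hsub2 : {x : ℝ | 2 * x - b₀ ∈ CA} ⊆ S := by
        intro x hx
        have : ((2 * x - b₀) + b₀) / 2 ∈ S := hsub _ (hCA hx) b₀ hb₀
        convert this using 2; ring
      calc volume CA / 2 = volume {x : ℝ | 2 * x - b₀ ∈ CA} :=
            (vol_half_preimage b₀ CA hcA.measurableSet).symm
        _ ≤ volume S := measure_mono hsub2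
    · set c := sSup CA with hc
      set d := sInf CB with hd
      have hcmem : c ∈ CA := hcA.sSup_mem hCAne
      have hdmem : d ∈ CB := hcB.sInf_mem hCBne
      set S₁ := {x : ℝ | 2 * x - d ∈ CA}
      set S₂ := {x : ℝ | 2 * x - c ∈ CB}
      have hS₁ : S₁ ⊆ S := by
        intro x hx
        have : ((2 * x - d) + d) / 2 ∈ S := hsub _ (hCA hx) d (hCB hdmem)
        convert this using 2; ring
      have hS₂ : S₂ ⊆ S := by
        intro x hx
        have : (c + (2 * x - c)) / 2 ∈ S := hsub c (hCA hcmem) _ (hCB hx)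
        convert this using 2; ring
      have hinter : S₁ ∩ S₂ ⊆ {(c + d) / 2} := by
        rintro x ⟨h1, h2⟩
        have ha : 2 * x - d ≤ c := le_csSup hcA.bddAbove h1
        have hb : d ≤ 2 * x - c := csInf_le hcB.bddBelow h2
        have : x = (c + d) / 2 := by linarith
        simp [this]
      have hm1 : MeasurableSet S₁ := by
        have : S₁ = (fun x : ℝ => 2 * x - d) ⁻¹' CA := rfl
        rw [this]
        exact hcA.measurableSet.preimage (by fun_prop)
      have hm2 : MeasurableSet S₂ := by
        have : S₂ = (fun x : ℝ => 2 * x - c) ⁻¹' CB := rfl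
        rw [this]
        exact hcB.measurableSet.preimage (by fun_prop)
      have hsum : volume S₁ + volume S₂ = volume (S₁ ∪ S₂) + volume (S₁ ∩ S₂) :=
        (measure_union_add_inter S₁ hm2).symm
      have hv1 : volume S₁ = volume CA / 2 := vol_half_preimage d CA hcA.measurableSet
      have hv2 : volume S₂ = volume CB / 2 := vol_half_preimage c CB hcB.measurableSet
      have hvi : volume (S₁ ∩ S₂) = 0 :=
        measure_mono_null hinter (by simp)
      calc volume CA / 2 + volume CB / 2 = volume S₁ + volume S₂ := by rw [hv1, hv2]
        _ = volume (S₁ ∪ S₂) + volume (S₁ ∩ S₂) := hsum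
        _ = volume (S₁ ∪ S₂) := by rw [hvi, add_zero]
        _ ≤ volume S := measure_mono (union_subset hS₁ hS₂)
  -- now use inner regularity
  have isub : ∀ (X : Set ℝ), MeasurableSet X →
      volume X = ⨆ (C : {C : Set ℝ // C ⊆ X ∧ IsCompact C}), volume C.1 := by
    intro X hX
    rw [hX.measure_eq_iSup_isCompact]
    apply le_antisymm
    · refine iSup_le fun C => iSup_le fun h1 => iSup_le fun h2 => ?_
      exact le_iSup_of_le ⟨C, h1, h2⟩ le_rfl
    · refine iSup_le fun C => ?_
      exact le_iSup_of_le C.1 (le_iSup_of_le C.2.1 (le_iSup_of_le C.2.2 le_rfl))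
  rw [isub A hA, isub B hB, ENNReal.iSup_div, ENNReal.iSup_div]
  have : Nonempty {C : Set ℝ // C ⊆ A ∧ IsCompact C} := ⟨⟨∅, empty_subset _, isCompact_empty⟩⟩
  have : Nonempty {C : Set ℝ // C ⊆ B ∧ IsCompact C} := ⟨⟨∅, empty_subset _, isCompact_empty⟩⟩
  apply ENNReal.iSup_add_iSup_le
  rintro ⟨CA, hCA, hcA⟩ ⟨CB, hCB, hcB⟩
  exact key CA hCA CB hCB hcA hcB


/-- AM-GM in `ℝ≥0∞`. -/
lemma ennreal_amgm (x y : ℝ≥0∞) : x * y ≤ ((x + y) / 2) ^ 2 := by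
  have h2 : ∀ u v : ℝ≥0∞, 2 * (u * v) ≤ u ^ 2 + v ^ 2 := by
    intro u v
    rcases le_total u v with huv | huv
    · obtain ⟨d, rfl⟩ : ∃ d, v = u + d := ⟨v - u, (add_tsub_cancel_of_le huv).symm⟩
      calc 2 * (u * (u + d)) = u ^ 2 + (u ^ 2 + 2 * u * d) := by ring
        _ ≤ u ^ 2 + (u + d) ^ 2 := by
            gcongr
            calc u ^ 2 + 2 * u * d ≤ u ^ 2 + 2 * u * d + d ^ 2 := le_self_add
              _ = (u + d) ^ 2 := by ring
    · obtain ⟨d, rfl⟩ : ∃ d, u = v + d := ⟨u - v, (add_tsub_cancel_of_le huv).symm⟩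
      calc 2 * ((v + d) * v) = v ^ 2 + (v ^ 2 + 2 * v * d) := by ring
        _ ≤ (v + d) ^ 2 + v ^ 2 := by
            rw [add_comm]
            gcongr
            calc v ^ 2 + 2 * v * d ≤ v ^ 2 + 2 * v * d + d ^ 2 := le_self_add
              _ = (v + d) ^ 2 := by ring
  have h4 : 4 * (x * y) ≤ (x + y) ^ 2 := by
    calc 4 * (x * y) = 2 * (x * y) + 2 * (x * y) := by ring
      _ ≤ (x ^ 2 + y ^ 2) + 2 * (x * y) := by gcongr; exact h2 x y
      _ = (x + y) ^ 2 := by ring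
  have : ((x + y) / 2) ^ 2 = (x + y) ^ 2 / 4 := by
    rw [div_eq_mul_inv, mul_pow, div_eq_mul_inv, ← ENNReal.inv_pow]
    norm_num
  rw [this]
  rw [ENNReal.le_div_iff_mul_le (by norm_num) (by norm_num)]
  calc x * y * 4 = 4 * (x * y) := by ring
    _ ≤ (x + y) ^ 2 := h4

/-- scaling of a lintegral over `Ioo 0 1` vs `Ioo 0 c`. -/
lemma lintegral_Ioo_scale {φ : ℝ → ℝ≥0∞} (hφ : Measurable φ) {c : ℝ} (hc : 0 < c) :
    ∫⁻ t in Ioo 0 c, φ t = ENNReal.ofReal c * ∫⁻ r in Ioo 0 1, φ (c * r) := by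
  have hmap : Measure.map (fun x : ℝ => c * x) volume = ENNReal.ofReal |c⁻¹| • volume :=
    Real.map_volume_mul_left (ne_of_gt hc)
  have key : ∫⁻ r, (Ioo (0:ℝ) 1).indicator (fun r => φ (c * r)) r
      = ENNReal.ofReal c⁻¹ * ∫⁻ t, (Ioo 0 c).indicator φ t := by
    have h1 : ∀ r : ℝ, (Ioo (0:ℝ) 1).indicator (fun r => φ (c * r)) r
        = (Ioo 0 c).indicator φ (c * r) := by
      intro r
      by_cases hr : r ∈ Ioo (0:ℝ) 1
      · rw [indicator_of_mem hr, indicator_of_mem]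
        exact ⟨mul_pos hc hr.1, by rw [mul_comm]; exact (mul_lt_iff_lt_one_left hc).mpr hr.2⟩
      · rw [indicator_of_notMem hr, indicator_of_notMem]
        intro hmem
        refine hr ⟨?_, ?_⟩
        · nlinarith [hmem.1]
        · nlinarith [hmem.2]
    simp_rw [h1]
    rw [← lintegral_map (hφ.indicator measurableSet_Ioo) (by fun_prop), hmap]
    rw [lintegral_smul_measure, lintegral_indicator measurableSet_Ioo,
      abs_of_pos (inv_pos.mpr hc), smul_eq_mul]
  rw [← lintegral_indicator measurableSet_Ioo, ← lintegral_indicator measurableSet_Ioo, key,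
    ← mul_assoc, ← ENNReal.ofReal_mul hc.le, mul_inv_cancel₀ (ne_of_gt hc)]
  simp


/-- layercake + vanishing + scaling for a function bounded by its (finite) sup. -/
lemma layer_repr {f : ℝ → ℝ≥0∞} (hf : Measurable f) {a : ℝ≥0∞} (ha0 : a ≠ 0) (hatop : a ≠ ∞)
    (hfa : ∀ x, f x ≤ a) :
    ∫⁻ x, f x = ENNReal.ofReal a.toReal *
      ∫⁻ r in Ioo 0 1, volume {x | ENNReal.ofReal (a.toReal * r) < f x} := by
  set ar := a.toReal with har'
  have har : 0 < ar := ENNReal.toReal_pos ha0 hatop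
  have hφm : Measurable fun t : ℝ => volume {x | ENNReal.ofReal t < f x} := by
    apply Antitone.measurable
    intro t₁ t₂ hle
    exact measure_mono fun x hx => lt_of_le_of_lt (ENNReal.ofReal_le_ofReal hle) hx
  have hfx_ne : ∀ x, f x ≠ ∞ := fun x => ne_top_of_le_ne_top hatop (hfa x)
  have lay : ∫⁻ x, f x = ∫⁻ t in Ioi 0, volume {x | ENNReal.ofReal t < f x} := by
    have h1 : ∫⁻ x, f x = ∫⁻ x, ENNReal.ofReal ((f x).toReal) := by
      congr 1; funext x; rw [ENNReal.ofReal_toReal (hfx_ne x)]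
    rw [h1]
    rw [lintegral_eq_lintegral_meas_lt volume (f := fun x => (f x).toReal)
      (Filter.Eventually.of_forall fun x => ENNReal.toReal_nonneg)
      (hf.ennreal_toReal).aemeasurable]
    apply setLIntegral_congr_fun measurableSet_Ioi
    intro t ht
    dsimp only
    congr 1
    ext x
    simp only [mem_setOf_eq]
    exact (ENNReal.ofReal_lt_iff_lt_toReal (le_of_lt ht) (hfx_ne x)).symm
  have hsplit : Ioi (0:ℝ) = Ioo 0 ar ∪ Ici ar := (Ioo_union_Ici_eq_Ioi har).symm
  have hvan : ∫⁻ t in Ici ar, volume {x | ENNReal.ofReal t < f x} = 0 := by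
    have : ∫⁻ t in Ici ar, volume {x | ENNReal.ofReal t < f x}
        = ∫⁻ _ in Ici ar, (0:ℝ≥0∞) := by
      apply setLIntegral_congr_fun measurableSet_Ici
      intro t ht
      dsimp only
      have : {x | ENNReal.ofReal t < f x} = ∅ := by
        ext x
        simp only [mem_setOf_eq, mem_empty_iff_false, iff_false, not_lt]
        calc f x ≤ a := hfa x
          _ = ENNReal.ofReal ar := (ENNReal.ofReal_toReal hatop).symm
          _ ≤ ENNReal.ofReal t := ENNReal.ofReal_le_ofReal ht
      rw [this]; exact measure_empty
    rw [this, lintegral_zero]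
  rw [lay, hsplit, lintegral_union measurableSet_Ici
    (disjoint_left.mpr fun t ht1 ht2 => absurd ht2 (not_le.mpr ht1.2)), hvan, add_zero, lintegral_Ioo_scale hφm har]


/-- 1-D Prékopa–Leindler (t = 1/2), bounded case. -/
lemma pl_one_bdd (f g h : ℝ → ℝ≥0∞) (hf : Measurable f) (hg : Measurable g) (hh : Measurable h)
    (hyp : ∀ x y : ℝ, f x * g y ≤ (h ((x + y) / 2)) ^ 2)
    (hftop : (⨆ x, f x) ≠ ∞) (hgtop : (⨆ y, g y) ≠ ∞) :
    (∫⁻ x, f x) * ∫⁻ y, g y ≤ (∫⁻ z, h z) ^ 2 := by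
  set a := ⨆ x, f x with ha
  set b := ⨆ y, g y with hb
  by_cases ha0 : a = 0
  · have hz : ∀ x, f x = 0 := fun x => le_antisymm (ha0 ▸ le_iSup f x) (zero_le)
    have : ∫⁻ x, f x = 0 := by simp [hz]
    rw [this, zero_mul]; exact zero_le
  by_cases hb0 : b = 0
  · have hz : ∀ y, g y = 0 := fun y => le_antisymm (hb0 ▸ le_iSup g y) (zero_le)
    have : ∫⁻ y, g y = 0 := by simp [hz]
    rw [this, mul_zero]; exact zero_le
  set ar := a.toReal with har'
  set br := b.toReal with hbr'
  set cr := Real.sqrt (ar * br) with hcr'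
  have har : 0 < ar := ENNReal.toReal_pos ha0 hftop
  have hbr : 0 < br := ENNReal.toReal_pos hb0 hgtop
  have hcr : 0 < cr := Real.sqrt_pos.mpr (mul_pos har hbr)
  have hcrsq : cr ^ 2 = ar * br := Real.sq_sqrt (mul_pos har hbr).le
  -- the truncated h
  set h' := fun z => min (h z) (ENNReal.ofReal cr) with hh'
  have hh'm : Measurable h' := hh.min measurable_const
  -- level set functions
  set Φf := fun r : ℝ => volume {x | ENNReal.ofReal (ar * r) < f x} with hΦf
  set Φg := fun r : ℝ => volume {y | ENNReal.ofReal (br * r) < g y} with hΦg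
  set Φh := fun r : ℝ => volume {z | ENNReal.ofReal (cr * r) < h z} with hΦh
  have hΦfm : Measurable Φf := by
    apply Antitone.measurable
    intro t₁ t₂ hle
    exact measure_mono fun x hx =>
      lt_of_le_of_lt (ENNReal.ofReal_le_ofReal (by nlinarith)) hx
  have hΦgm : Measurable Φg := by
    apply Antitone.measurable
    intro t₁ t₂ hle
    exact measure_mono fun x hx =>
      lt_of_le_of_lt (ENNReal.ofReal_le_ofReal (by nlinarith)) hx
  have hΦhm : Measurable Φh := by
    apply Antitone.measurable
    intro t₁ t₂ hle
    exact measure_mono fun x hx =>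
      lt_of_le_of_lt (ENNReal.ofReal_le_ofReal (by nlinarith)) hx
  -- representations
  have hLf : ∫⁻ x, f x = ENNReal.ofReal ar * ∫⁻ r in Ioo 0 1, Φf r :=
    layer_repr hf ha0 hftop fun x => le_iSup f x
  have hLg : ∫⁻ y, g y = ENNReal.ofReal br * ∫⁻ r in Ioo 0 1, Φg r :=
    layer_repr hg hb0 hgtop fun y => le_iSup g y
  have hLh : ENNReal.ofReal cr * ∫⁻ r in Ioo 0 1, Φh r ≤ ∫⁻ z, h z := by
    have hC0 : (ENNReal.ofReal cr) ≠ 0 := by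
      simp only [ne_eq, ENNReal.ofReal_eq_zero, not_le]; exact hcr
    have hrep := layer_repr hh'm hC0 (by simp) (fun z => min_le_right _ _)
    rw [ENNReal.toReal_ofReal hcr.le] at hrep
    have hcongr : ∫⁻ r in Ioo 0 1, volume {z | ENNReal.ofReal (cr * r) < h' z}
        = ∫⁻ r in Ioo 0 1, Φh r := by
      apply setLIntegral_congr_fun measurableSet_Ioo
      intro r hr
      dsimp only
      congr 1
      ext z
      simp only [mem_setOf_eq, hh', lt_min_iff]
      constructor
      · rintro ⟨h1, -⟩; exact h1
      · intro h1
        refine ⟨h1, (ENNReal.ofReal_lt_ofReal_iff hcr).mpr ?_⟩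
        nlinarith [hr.1, hr.2]
    calc ENNReal.ofReal cr * ∫⁻ r in Ioo 0 1, Φh r
        = ∫⁻ z, h' z := by rw [hrep, hcongr]
      _ ≤ ∫⁻ z, h z := lintegral_mono fun z => min_le_left _ _
  -- level comparison
  have hlev : ∀ r ∈ Ioo (0:ℝ) 1, Φf r / 2 + Φg r / 2 ≤ Φh r := by
    intro r hr
    apply vol_midpoints _ _ _
      (measurableSet_lt measurable_const hf)
      (measurableSet_lt measurable_const hg)
      (measurableSet_lt measurable_const hh)
    · -- A nonempty
      have : ENNReal.ofReal (ar * r) < a := by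
        have h1 : ENNReal.ofReal (ar * r) < ENNReal.ofReal ar :=
          (ENNReal.ofReal_lt_ofReal_iff har).mpr (by nlinarith [hr.1, hr.2])
        rwa [ENNReal.ofReal_toReal hftop] at h1
      obtain ⟨x, hx⟩ := lt_iSup_iff.mp this
      exact ⟨x, hx⟩
    · have : ENNReal.ofReal (br * r) < b := by
        have h1 : ENNReal.ofReal (br * r) < ENNReal.ofReal br :=
          (ENNReal.ofReal_lt_ofReal_iff hbr).mpr (by nlinarith [hr.1, hr.2])
        rwa [ENNReal.ofReal_toReal hgtop] at h1
      obtain ⟨y, hy⟩ := lt_iSup_iff.mp this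
      exact ⟨y, hy⟩
    · -- midpoints
      intro x hx y hy
      simp only [mem_setOf_eq] at hx hy ⊢
      by_contra hcon
      push_neg at hcon
      have hsq : (h ((x + y) / 2)) ^ 2 ≤ ENNReal.ofReal (cr * r) ^ 2 := by gcongr
      have hlt : ENNReal.ofReal (cr * r) ^ 2 < f x * g y := by
        have heq : ENNReal.ofReal (cr * r) ^ 2
            = ENNReal.ofReal (ar * r) * ENNReal.ofReal (br * r) := by
          rw [sq, ← ENNReal.ofReal_mul (mul_nonneg hcr.le hr.1.le),
            ← ENNReal.ofReal_mul (mul_nonneg har.le hr.1.le)]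
          congr 1
          have : cr * r * (cr * r) = cr ^ 2 * (r * r) := by ring
          rw [this, hcrsq]; ring
        rw [heq]
        exact ENNReal.mul_lt_mul hx hy
      exact absurd (le_trans (hyp x y) hsq) (not_le.mpr hlt)
  -- integrate the level comparison
  set If := ∫⁻ r in Ioo (0:ℝ) 1, Φf r with hIf
  set Ig := ∫⁻ r in Ioo (0:ℝ) 1, Φg r with hIg
  set Ih := ∫⁻ r in Ioo (0:ℝ) 1, Φh r with hIh
  have hmono : If / 2 + Ig / 2 ≤ Ih := by
    have h1 : ∫⁻ r in Ioo (0:ℝ) 1, (Φf r / 2 + Φg r / 2) ≤ Ih :=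
      setLIntegral_mono hΦhm hlev
    have h2 : ∫⁻ r in Ioo (0:ℝ) 1, (Φf r / 2 + Φg r / 2)
        = If / 2 + Ig / 2 := by
      rw [lintegral_add_left (by exact (hΦfm.div_const 2).comp measurable_id)]
      congr 1
      · simp_rw [div_eq_mul_inv]
        rw [lintegral_mul_const _ hΦfm]
      · simp_rw [div_eq_mul_inv]
        rw [lintegral_mul_const _ hΦgm]
    rwa [h2] at h1
  -- final algebra
  have hcrid : ENNReal.ofReal ar * ENNReal.ofReal br = ENNReal.ofReal cr ^ 2 := by
    rw [sq, ← ENNReal.ofReal_mul hcr.le, ← ENNReal.ofReal_mul har.le]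
    congr 1
    rw [← hcrsq]; ring
  calc (∫⁻ x, f x) * ∫⁻ y, g y
      = (ENNReal.ofReal ar * ENNReal.ofReal br) * (If * Ig) := by
        rw [hLf, hLg]; ring
    _ ≤ (ENNReal.ofReal ar * ENNReal.ofReal br) * ((If + Ig) / 2) ^ 2 := by
        gcongr
        exact ennreal_amgm If Ig
    _ = (ENNReal.ofReal cr * ((If + Ig) / 2)) ^ 2 := by
        rw [hcrid]; ring
    _ ≤ (ENNReal.ofReal cr * Ih) ^ 2 := by
        gcongr
        rw [← ENNReal.div_add_div_same]
        exact hmono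
    _ ≤ (∫⁻ z, h z) ^ 2 := by gcongr

/-- 1-D Prékopa–Leindler (t = 1/2). -/
theorem pl_one (f g h : ℝ → ℝ≥0∞) (hf : Measurable f) (hg : Measurable g) (hh : Measurable h)
    (hyp : ∀ x y : ℝ, f x * g y ≤ (h ((x + y) / 2)) ^ 2) :
    (∫⁻ x, f x) * ∫⁻ y, g y ≤ (∫⁻ z, h z) ^ 2 := by
  have main : ∀ N M : ℕ, (∫⁻ x, min (f x) N) * (∫⁻ y, min (g y) M) ≤ (∫⁻ z, h z) ^ 2 := by
    intro N M
    apply pl_one_bdd _ _ h (hf.min measurable_const) (hg.min measurable_const) hh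
    · intro x y
      calc min (f x) N * min (g y) M ≤ f x * g y := by gcongr <;> exact min_le_left _ _
        _ ≤ (h ((x + y) / 2)) ^ 2 := hyp x y
    · exact ne_top_of_le_ne_top (by simp : ((N:ℝ≥0∞)) ≠ ∞)
        (iSup_le fun x => min_le_right _ _)
    · exact ne_top_of_le_ne_top (by simp : ((M:ℝ≥0∞)) ≠ ∞)
        (iSup_le fun y => min_le_right _ _)
  have hsupf : ∀ (φ : ℝ → ℝ≥0∞), Measurable φ → ∫⁻ x, φ x = ⨆ N : ℕ, ∫⁻ x, min (φ x) N := by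
    intro φ hφ
    rw [← lintegral_iSup (fun N => hφ.min measurable_const)]
    · congr 1
      funext x
      apply le_antisymm
      · by_cases hx : φ x = ∞
        · simp only [hx, top_inf_eq, ENNReal.iSup_natCast, le_refl]
        · obtain ⟨N, hN⟩ := ENNReal.exists_nat_gt hx
          exact le_iSup_of_le N (by simp [le_of_lt hN])
      · exact iSup_le fun N => min_le_left _ _
    · intro N M hNM x
      exact min_le_min le_rfl (by exact_mod_cast Nat.cast_le.mpr hNM)
  rw [hsupf f hf, hsupf g hg, ENNReal.iSup_mul]
  apply iSup_le
  intro N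
  rw [ENNReal.mul_iSup]
  exact iSup_le fun M => main N M


/-- Prékopa–Leindler (t = 1/2) on `Fin m → ℝ`. -/
theorem pl_fin : ∀ (m : ℕ) (f g h : (Fin m → ℝ) → ℝ≥0∞), Measurable f → Measurable g →
    Measurable h → (∀ x y, f x * g y ≤ (h ((2⁻¹ : ℝ) • (x + y))) ^ 2) →
    (∫⁻ x, f x) * ∫⁻ y, g y ≤ (∫⁻ z, h z) ^ 2 := by
  intro m
  induction m with
  | zero =>
    intro f g h hf hg hh hyp
    have huniv : (volume : Measure (Fin 0 → ℝ)) Set.univ = 1 := by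
      rw [volume_pi, Measure.pi_of_empty]
      simp
    rw [lintegral_unique f, lintegral_unique g, lintegral_unique h, huniv]
    simp only [mul_one]
    have key : ∀ a b c : Fin 0 → ℝ, f a * g b ≤ h c ^ 2 := by
      intro a b c
      have := hyp a b
      rwa [Subsingleton.elim ((2⁻¹:ℝ) • (a + b)) c] at this
    exact key _ _ _
  | succ m ih =>
    intro f g h hf hg hh hyp
    set e := MeasurableEquiv.piFinSuccAbove (fun _ : Fin (m + 1) => ℝ) 0 with he
    have hmp : MeasurePreserving e.symm volume volume :=
      (volume_preserving_piFinSuccAbove (fun _ : Fin (m + 1) => ℝ) 0).symm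
    -- e.symm (x, p) = Fin.insertNth 0 x p
    have hesymm : ∀ q : ℝ × (Fin m → ℝ), e.symm q = Fin.insertNth 0 q.1 q.2 := by
      intro q
      rw [he, MeasurableEquiv.piFinSuccAbove_symm_apply]
      rfl
    have hmid : ∀ (x₁ x₂ : ℝ) (y₁ y₂ : Fin m → ℝ),
        e.symm ((x₁ + x₂) / 2, (2⁻¹ : ℝ) • (y₁ + y₂))
          = (2⁻¹ : ℝ) • (e.symm (x₁, y₁) + e.symm (x₂, y₂)) := by
      intro x₁ x₂ y₁ y₂
      rw [hesymm, hesymm, hesymm]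
      simp only
      rw [← Fin.insertNth_add]
      funext j
      refine Fin.succAboveCases 0 ?_ ?_ j
      · simp only [Fin.insertNth_apply_same, Pi.smul_apply, smul_eq_mul]
        ring
      · intro j'
        simp only [Fin.insertNth_apply_succAbove, Pi.smul_apply, smul_eq_mul]
    set f' := fun q : ℝ × (Fin m → ℝ) => f (e.symm q) with hf'
    set g' := fun q : ℝ × (Fin m → ℝ) => g (e.symm q) with hg'
    set h' := fun q : ℝ × (Fin m → ℝ) => h (e.symm q) with hh'
    have hf'm : Measurable f' := hf.comp e.symm.measurable
    have hg'm : Measurable g' := hg.comp e.symm.measurable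
    have hh'm : Measurable h' := hh.comp e.symm.measurable
    set F := fun y : Fin m → ℝ => ∫⁻ x : ℝ, f' (x, y) with hF
    set G := fun y : Fin m → ℝ => ∫⁻ x : ℝ, g' (x, y) with hG
    set H := fun y : Fin m → ℝ => ∫⁻ x : ℝ, h' (x, y) with hH
    have hFm : Measurable F := hf'm.lintegral_prod_left'
    have hGm : Measurable G := hg'm.lintegral_prod_left'
    have hHm : Measurable H := hh'm.lintegral_prod_left'
    have hint : ∀ (φ : (Fin (m+1) → ℝ) → ℝ≥0∞), Measurable φ →
        ∫⁻ z, φ z = ∫⁻ y, ∫⁻ x, φ (e.symm (x, y)) := by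
      intro φ hφ
      rw [← hmp.lintegral_comp hφ, Measure.volume_eq_prod]
      exact lintegral_prod_symm (fun q => φ (e.symm q))
        ((hφ.comp e.symm.measurable).aemeasurable)
    rw [hint f hf, hint g hg, hint h hh]
    apply ih F G H hFm hGm hHm
    intro y₁ y₂
    apply pl_one (fun x => f' (x, y₁)) (fun x => g' (x, y₂))
      (fun x => h' (x, (2⁻¹ : ℝ) • (y₁ + y₂)))
      (hf'm.comp (measurable_prodMk_right))
      (hg'm.comp (measurable_prodMk_right))
      (hh'm.comp (measurable_prodMk_right))
    intro x₁ x₂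
    have := hyp (e.symm (x₁, y₁)) (e.symm (x₂, y₂))
    rwa [← hmid] at this


variable {m : ℕ}


/-- the point of `E (m+1)` with `i`-th coordinate `s` and remaining coordinates `w`. -/
def emb (i : Fin (m + 1)) (s : ℝ) (w : Fin m → ℝ) : E (m + 1) :=
  WithLp.toLp 2 (Fin.insertNth i s w)

/-- the measurable equivalence splitting off coordinate `i`. -/
def split (i : Fin (m + 1)) : E (m + 1) ≃ᵐ ℝ × (Fin m → ℝ) :=
  (MeasurableEquiv.toLp 2 (Fin (m + 1) → ℝ)).symm.trans
    (MeasurableEquiv.piFinSuccAbove (fun _ : Fin (m + 1) => ℝ) i)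

lemma split_mp (i : Fin (m + 1)) : MeasurePreserving (split i) volume volume := by
  have h1 := EuclideanSpace.volume_preserving_symm_measurableEquiv_toLp (Fin (m + 1))
  have h2 := volume_preserving_piFinSuccAbove (fun _ : Fin (m + 1) => ℝ) i
  exact h2.comp h1

lemma split_symm (i : Fin (m + 1)) (s : ℝ) (w : Fin m → ℝ) :
    (split i).symm (s, w) = emb i s w := by
  rfl

lemma emb_apply_same (i : Fin (m + 1)) (s : ℝ) (w : Fin m → ℝ) :
    emb i s w i = s := by
  unfold emb
  exact Fin.insertNth_apply_same (α := fun _ => ℝ) i s w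

lemma emb_apply_succAbove (i : Fin (m + 1)) (s : ℝ) (w : Fin m → ℝ) (j : Fin m) :
    emb i s w (i.succAbove j) = w j := by
  unfold emb
  exact Fin.insertNth_apply_succAbove (α := fun _ => ℝ) i s w j

lemma emb_surj (i : Fin (m + 1)) (x : E (m + 1)) :
    x = emb i (x i) (fun j => x (i.succAbove j)) := by
  unfold emb
  exact congrArg (WithLp.toLp 2) (Fin.insertNth_self_removeNth i x.ofLp).symm

/-- inner products split across the `i`-th coordinate. -/
lemma inner_emb (i : Fin (m + 1)) (s ζ : ℝ) (v w : Fin m → ℝ) :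
    ⟪emb i s v, emb i ζ w⟫_ℝ = s * ζ + ∑ j, v j * w j := by
  rw [PiLp.inner_apply]
  rw [Fin.sum_univ_succAbove (fun j => ⟪(emb i s v) j, (emb i ζ w) j⟫_ℝ) i]
  simp only [emb_apply_same, emb_apply_succAbove, RCLike.inner_apply, conj_trivial]
  rw [mul_comm ζ s]
  exact congrArg _ (Finset.sum_congr rfl fun j _ => mul_comm _ _)

lemma emb_add (i : Fin (m + 1)) (s t : ℝ) (v w : Fin m → ℝ) :
    emb i s v + emb i t w = emb i (s + t) (v + w) := by
  unfold emb
  rw [← WithLp.toLp_add, Fin.insertNth_add]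

lemma emb_smul (i : Fin (m + 1)) (c s : ℝ) (v : Fin m → ℝ) :
    c • emb i s v = emb i (c * s) (c • v) := by
  ext j
  have hsm : ∀ (x : E (m + 1)) (j : Fin (m + 1)), (c • x) j = c * x j := fun x j => rfl
  refine Fin.succAboveCases i ?_ ?_ j
  · rw [hsm, emb_apply_same, emb_apply_same]
  · intro j'
    rw [hsm, emb_apply_succAbove, emb_apply_succAbove]
    rfl

lemma emb_neg (i : Fin (m + 1)) (s : ℝ) (v : Fin m → ℝ) :
    -emb i s v = emb i (-s) (-v) := by
  have := emb_smul i (-1) s v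
  simpa using this


def proj (i : Fin (m + 1)) (x : E (m + 1)) : Fin m → ℝ := fun j => x (i.succAbove j)

lemma inner_single (i : Fin (m + 1)) (x : E (m + 1)) :
    ⟪x, EuclideanSpace.single i (1:ℝ)⟫_ℝ = x i := by
  rw [PiLp.inner_apply]
  simp only [EuclideanSpace.single_apply, RCLike.inner_apply, conj_trivial]
  rw [Finset.sum_congr rfl (fun j _ => by rw [ite_mul, one_mul, zero_mul])]
  rw [Finset.sum_ite_eq' Finset.univ i]
  simp

lemma base_point_form (i : Fin (m + 1)) (x : E (m + 1)) (s : ℝ) :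
    x - (x i) • EuclideanSpace.single i (1:ℝ)
      + s • EuclideanSpace.single i (1:ℝ) = emb i s (proj i x) := by
  ext j
  have hco : ∀ (a b : E (m + 1)) (c : ℝ) (j : Fin (m + 1)),
      (a - c • b + (s • b)) j = a j - c * b j + s * b j := fun _ _ _ _ => rfl
  rw [hco]
  refine Fin.succAboveCases i ?_ ?_ j
  · rw [emb_apply_same]
    simp [EuclideanSpace.single_apply]
  · intro j'
    rw [emb_apply_succAbove]
    have : EuclideanSpace.single i (1:ℝ) (i.succAbove j') = 0 := by
      simp [EuclideanSpace.single_apply, Fin.succAbove_ne i j']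
    rw [this, proj]
    ring

lemma mem_steiner_iff (i : Fin (m + 1)) (K : Set (E (m + 1))) (x : E (m + 1)) :
    x ∈ steiner (EuclideanSpace.single i (1:ℝ)) K ↔
      ∃ s t : ℝ, emb i s (proj i x) ∈ K ∧ emb i t (proj i x) ∈ K ∧ x i = (s - t) / 2 := by
  unfold steiner
  simp only [mem_setOf_eq, inner_single, base_point_form]

/-- membership of an `emb` point in the steiner symmetral. -/
lemma emb_mem_steiner_iff (i : Fin (m + 1)) (K : Set (E (m + 1))) (c : ℝ) (w : Fin m → ℝ) :
    emb i c w ∈ steiner (EuclideanSpace.single i (1:ℝ)) K ↔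
      ∃ s t : ℝ, emb i s w ∈ K ∧ emb i t w ∈ K ∧ c = (s - t) / 2 := by
  rw [mem_steiner_iff]
  have h1 : proj i (emb i c w) = w := by
    funext j; rw [proj, emb_apply_succAbove]
  rw [h1, emb_apply_same]

lemma polar_closed {n : ℕ} (K : Set (E n)) : IsClosed (polarBody K) := by
  have : polarBody K = ⋂ x ∈ K, {y : E n | ⟪x, y⟫_ℝ ≤ 1} := by
    ext y; simp [polarBody, mem_iInter]
  rw [this]
  exact isClosed_biInter fun x _ =>
    isClosed_le (Continuous.inner continuous_const continuous_id) continuous_const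

lemma steiner_compact (i : Fin (m + 1)) (K : Set (E (m + 1))) (hK : IsCompact K) :
    IsCompact (steiner (EuclideanSpace.single i (1:ℝ)) K) := by
  set u := EuclideanSpace.single i (1:ℝ)
  set D := (K ×ˢ K) ∩ {p : E (m + 1) × E (m + 1) | proj i p.1 = proj i p.2} with hD
  have hDc : IsCompact D := by
    apply (hK.prod hK).inter_right
    have hc1 : Continuous fun p : E (m + 1) × E (m + 1) => proj i p.1 := by
      unfold proj
      apply continuous_pi
      intro j
      exact (continuous_apply _).comp ((PiLp.continuous_ofLp 2 _).comp continuous_fst)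
    have hc2 : Continuous fun p : E (m + 1) × E (m + 1) => proj i p.2 := by
      unfold proj
      apply continuous_pi
      intro j
      exact (continuous_apply _).comp ((PiLp.continuous_ofLp 2 _).comp continuous_snd)
    exact isClosed_eq hc1 hc2
  set g : E (m + 1) × E (m + 1) → E (m + 1) :=
    fun p => emb i ((p.1 i - p.2 i) / 2) (proj i p.1) with hg
  have hgc : Continuous g := by
    unfold g
    unfold emb
    have h1 : Continuous fun p : E (m + 1) × E (m + 1) => (p.1 i - p.2 i) / 2 := by
      apply Continuous.div_const
      exact ((continuous_apply i).comp ((PiLp.continuous_ofLp 2 _).comp continuous_fst)).sub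
        ((continuous_apply i).comp ((PiLp.continuous_ofLp 2 _).comp continuous_snd))
    have h2 : Continuous fun p : E (m + 1) × E (m + 1) => proj i p.1 := by
      apply continuous_pi
      intro j
      exact (continuous_apply _).comp ((PiLp.continuous_ofLp 2 _).comp continuous_fst)
    -- continuity of insertNth in its two arguments
    apply (PiLp.continuous_toLp 2 _).comp
    apply continuous_pi
    intro j
    refine Fin.succAboveCases i ?_ ?_ j
    · simpa only [Fin.insertNth_apply_same] using h1
    · intro j'
      simp only [Fin.insertNth_apply_succAbove]
      exact (continuous_apply j').comp h2
  have himg : steiner u K = g '' D := by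
    ext x
    rw [mem_steiner_iff]
    constructor
    · rintro ⟨s, t, hs, ht, hx⟩
      refine ⟨(emb i s (proj i x), emb i t (proj i x)), ⟨⟨hs, ht⟩, ?_⟩, ?_⟩
      · simp only [mem_setOf_eq]
        funext j
        rw [proj, proj, emb_apply_succAbove, emb_apply_succAbove]
      · rw [hg]
        simp only [emb_apply_same]
        have hpr : proj i (emb i s (proj i x)) = proj i x := by
          funext j; rw [proj, emb_apply_succAbove]
        rw [hpr, ← hx]
        exact (emb_surj i x).symm
    · rintro ⟨⟨x₁, x₂⟩, ⟨⟨h1, h2⟩, heq⟩, rfl⟩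
      simp only [mem_setOf_eq] at heq
      refine ⟨x₁ i, x₂ i, ?_, ?_, ?_⟩
      · have hpr : proj i (g (x₁, x₂)) = proj i x₁ := by
          funext j
          show (g (x₁, x₂)) (i.succAbove j) = proj i x₁ j
          rw [hg]
          exact emb_apply_succAbove _ _ _ _
        rw [hpr]
        rw [show emb i (x₁ i) (proj i x₁) = x₁ from (emb_surj i x₁).symm]
        exact h1
      · have hpr : proj i (g (x₁, x₂)) = proj i x₂ := by
          funext j
          show (g (x₁, x₂)) (i.succAbove j) = proj i x₂ j
          rw [hg]
          show (emb i ((x₁ i - x₂ i)/2) (proj i x₁)) (i.succAbove j) = proj i x₂ j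
          rw [emb_apply_succAbove, heq]
        rw [hpr]
        rw [show emb i (x₂ i) (proj i x₂) = x₂ from (emb_surj i x₂).symm]
        exact h2
      · show (emb i ((x₁ i - x₂ i)/2) (proj i x₁)) i = (x₁ i - x₂ i) / 2
        rw [emb_apply_same]
  rw [himg]
  exact hDc.image hgc


lemma emb_measurable (i : Fin (m + 1)) :
    Measurable (fun p : ℝ × (Fin m → ℝ) => emb i p.1 p.2) := by
  have : (fun p : ℝ × (Fin m → ℝ) => emb i p.1 p.2) = (split i).symm := by
    funext p
    rw [← split_symm i p.1 p.2]
  rw [this]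
  exact (split i).symm.measurable

/-- Fubini with the distinguished coordinate inside. -/
lemma lint_split (i : Fin (m + 1)) (F : E (m + 1) → ℝ≥0∞) (hF : Measurable F) :
    ∫⁻ x, F x = ∫⁻ s : ℝ, ∫⁻ w : Fin m → ℝ, F (emb i s w) := by
  have hmp : MeasurePreserving (split i).symm volume volume := (split_mp i).symm
  rw [← hmp.lintegral_comp hF, Measure.volume_eq_prod]
  rw [lintegral_prod (fun p => F ((split i).symm p))
    ((hF.comp (split i).symm.measurable).aemeasurable)]
  simp only [split_symm]

/-- Fubini with the distinguished coordinate outside. -/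
lemma lint_split' (i : Fin (m + 1)) (F : E (m + 1) → ℝ≥0∞) (hF : Measurable F) :
    ∫⁻ x, F x = ∫⁻ w : Fin m → ℝ, ∫⁻ s : ℝ, F (emb i s w) := by
  have hmp : MeasurePreserving (split i).symm volume volume := (split_mp i).symm
  rw [← hmp.lintegral_comp hF, Measure.volume_eq_prod]
  rw [lintegral_prod_symm (fun p => F ((split i).symm p))
    ((hF.comp (split i).symm.measurable).aemeasurable)]
  simp only [split_symm]

/-- negation on `Fin m → ℝ` preserves volume. -/
lemma neg_mp : MeasurePreserving (fun w : Fin m → ℝ => -w) volume volume := by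
  have h1 : MeasurePreserving (fun x : ℝ => -x) volume volume :=
    ⟨measurable_neg, Measure.map_neg_eq_self (volume : Measure ℝ)⟩
  have h2 := volume_preserving_pi (fun _ : Fin m => h1)
  have : (fun w : Fin m → ℝ => -w) = fun w : Fin m → ℝ => (fun j => -(w j)) := by
    funext w; rfl
  rw [this]
  exact h2

/-- negation on `ℝ` preserves volume. -/
lemma neg_mp_real : MeasurePreserving (fun x : ℝ => -x) volume volume :=
  ⟨measurable_neg, Measure.map_neg_eq_self (volume : Measure ℝ)⟩


section main
variable (i : Fin (m + 1)) (f : E (m + 1) → ℝ)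

/-- the density as an `ℝ≥0∞`-valued function. -/
def dens (f : E (m + 1) → ℝ) (x : E (m + 1)) : ℝ≥0∞ := ENNReal.ofReal (f x)

variable (hfm : Measurable f) (hf0 : ∀ x, 0 ≤ f x)
  (hflc : ∀ x y : E (m + 1), ∀ t : ℝ, t ∈ Set.Icc (0 : ℝ) 1 →
    f x ^ (1 - t) * f y ^ t ≤ f ((1 - t) • x + t • y))
  (hfu : ∀ (x : E (m + 1)) (ε : Fin (m + 1) → ℝ), (∀ i, ε i = 1 ∨ ε i = -1) →
    f (WithLp.toLp 2 (fun i => ε i * x i) : E (m + 1)) = f x)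

include hf0 hflc in
lemma dens_logconc : ∀ x y : E (m + 1),
    dens f x * dens f y ≤ (dens f ((2⁻¹ : ℝ) • (x + y))) ^ 2 := by
  intro x y
  have h := hflc x y 2⁻¹ (by constructor <;> norm_num)
  have h2 : (1 - 2⁻¹ : ℝ) = 2⁻¹ := by norm_num
  rw [h2] at h
  have hmid : (2⁻¹ : ℝ) • x + (2⁻¹ : ℝ) • y = (2⁻¹ : ℝ) • (x + y) := (smul_add _ _ _).symm
  rw [hmid] at h
  have hprod : f x * f y ≤ (f ((2⁻¹ : ℝ) • (x + y))) ^ 2 := by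
    have hx : (f x ^ (2⁻¹:ℝ)) ^ 2 = f x := by
      rw [← Real.rpow_natCast (f x ^ (2⁻¹:ℝ)) 2, ← Real.rpow_mul (hf0 x)]
      norm_num
    have hy : (f y ^ (2⁻¹:ℝ)) ^ 2 = f y := by
      rw [← Real.rpow_natCast (f y ^ (2⁻¹:ℝ)) 2, ← Real.rpow_mul (hf0 y)]
      norm_num
    calc f x * f y = (f x ^ (2⁻¹:ℝ) * f y ^ (2⁻¹:ℝ)) ^ 2 := by
          rw [mul_pow, hx, hy]
      _ ≤ (f ((2⁻¹ : ℝ) • (x + y))) ^ 2 := by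
          apply pow_le_pow_left₀ (mul_nonneg (Real.rpow_nonneg (hf0 x) _)
            (Real.rpow_nonneg (hf0 y) _)) h
  calc dens f x * dens f y = ENNReal.ofReal (f x * f y) :=
        (ENNReal.ofReal_mul (hf0 x)).symm
    _ ≤ ENNReal.ofReal ((f ((2⁻¹ : ℝ) • (x + y))) ^ 2) := ENNReal.ofReal_le_ofReal hprod
    _ = (dens f ((2⁻¹ : ℝ) • (x + y))) ^ 2 := by
        rw [dens, ENNReal.ofReal_pow (hf0 _)]

include hfu in
lemma dens_flip_i : ∀ (c : ℝ) (w : Fin m → ℝ),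
    dens f (emb i (-c) w) = dens f (emb i c w) := by
  intro c w
  unfold dens
  congr 1
  have hfu' := hfu (emb i c w) (fun j => if j = i then -1 else 1)
    (fun j => by by_cases h : j = i <;> simp [h])
  have hpt : (WithLp.toLp 2 (fun j => (if j = i then (-1:ℝ) else 1) * emb i c w j) : E (m + 1))
      = emb i (-c) w := by
    ext j
    refine Fin.succAboveCases i ?_ ?_ j
    · show (if i = i then (-1:ℝ) else 1) * emb i c w i = emb i (-c) w i
      rw [if_pos rfl, emb_apply_same, emb_apply_same]; ring
    · intro j'
      show (if i.succAbove j' = i then (-1:ℝ) else 1) * emb i c w (i.succAbove j')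
          = emb i (-c) w (i.succAbove j')
      rw [if_neg (Fin.succAbove_ne i j'), emb_apply_succAbove, emb_apply_succAbove, one_mul]
  rw [← hpt, hfu']

include hfu in
lemma dens_flip_base : ∀ (c : ℝ) (w : Fin m → ℝ),
    dens f (emb i c (-w)) = dens f (emb i c w) := by
  intro c w
  unfold dens
  congr 1
  have hfu' := hfu (emb i c w) (fun j => if j = i then 1 else -1)
    (fun j => by by_cases h : j = i <;> simp [h])
  have hpt : (WithLp.toLp 2 (fun j => (if j = i then (1:ℝ) else -1) * emb i c w j) : E (m + 1))
      = emb i c (-w) := by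
    ext j
    refine Fin.succAboveCases i ?_ ?_ j
    · show (if i = i then (1:ℝ) else -1) * emb i c w i = emb i c (-w) i
      rw [if_pos rfl, emb_apply_same, emb_apply_same]; ring
    · intro j'
      show (if i.succAbove j' = i then (1:ℝ) else -1) * emb i c w (i.succAbove j')
          = emb i c (-w) (i.succAbove j')
      rw [if_neg (Fin.succAbove_ne i j'), emb_apply_succAbove, emb_apply_succAbove]
      show (-1) * w j' = (-w) j'
      rw [Pi.neg_apply]; ring
  rw [← hpt, hfu']

lemma ennreal_le_of_sq {a b : ℝ≥0∞} (h : a * a ≤ b ^ 2) : a ≤ b := by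
  by_contra hc
  push_neg at hc
  have : b ^ 2 < a * a := by
    rw [sq]
    exact ENNReal.mul_lt_mul hc hc
  exact absurd h (not_le.mpr this)

include hfm hf0 hflc hfu in
lemma primal (K : Set (E (m + 1))) (hKm : MeasurableSet K)
    (hSm : MeasurableSet (steiner (EuclideanSpace.single i (1:ℝ)) K)) :
    ∫⁻ x, (K.indicator (dens f)) x ≤
      ∫⁻ x, ((steiner (EuclideanSpace.single i (1:ℝ)) K).indicator (dens f)) x := by
  set S := steiner (EuclideanSpace.single i (1:ℝ)) K with hS
  have hdm : Measurable (dens f) := ENNReal.measurable_ofReal.comp hfm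
  rw [lint_split' i _ (hdm.indicator hKm), lint_split' i _ (hdm.indicator hSm)]
  apply lintegral_mono
  intro w
  have hembm : Measurable (fun s : ℝ => emb i s w) :=
    (emb_measurable i).comp (measurable_id.prodMk measurable_const)
  set A := {s : ℝ | emb i s w ∈ K} with hA
  have hAm : MeasurableSet A := hembm hKm
  set SA := {s : ℝ | emb i s w ∈ S} with hSA
  have hSAm : MeasurableSet SA := hembm hSm
  set Ff := fun s : ℝ => dens f (emb i s w) with hFf
  have hFfm : Measurable Ff := hdm.comp hembm
  set f₁ := fun s : ℝ => A.indicator Ff s with hf₁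
  set g₁ := fun y : ℝ => f₁ (-y) with hg₁
  set h₁ := fun s : ℝ => SA.indicator Ff s with hh₁
  have hf₁m : Measurable f₁ := hFfm.indicator hAm
  have hg₁m : Measurable g₁ := hf₁m.comp measurable_neg
  have hh₁m : Measurable h₁ := hFfm.indicator hSAm
  have hKind : ∀ s : ℝ, (K.indicator (dens f)) (emb i s w) = f₁ s := by
    intro s
    by_cases hs : emb i s w ∈ K
    · rw [indicator_of_mem hs]
      exact (indicator_of_mem (show s ∈ A from hs) Ff).symm
    · rw [indicator_of_notMem hs]
      exact (indicator_of_notMem (show s ∉ A from hs) Ff).symm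
  have hSind : ∀ s : ℝ, (S.indicator (dens f)) (emb i s w) = h₁ s := by
    intro s
    by_cases hs : emb i s w ∈ S
    · rw [indicator_of_mem hs]
      exact (indicator_of_mem (show s ∈ SA from hs) Ff).symm
    · rw [indicator_of_notMem hs]
      exact (indicator_of_notMem (show s ∉ SA from hs) Ff).symm
  show ∫⁻ s, (K.indicator (dens f)) (emb i s w) ≤ ∫⁻ s, (S.indicator (dens f)) (emb i s w)
  rw [lintegral_congr hKind, lintegral_congr hSind]
  -- the two factors have equal integrals
  have hneg : ∫⁻ y, g₁ y = ∫⁻ s, f₁ s := neg_mp_real.lintegral_comp hf₁m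
  -- Prékopa–Leindler hypothesis
  have hyp : ∀ x y : ℝ, f₁ x * g₁ y ≤ (h₁ ((x + y) / 2)) ^ 2 := by
    intro x y
    by_cases hx : x ∈ A
    swap
    · have h0 : f₁ x = 0 := indicator_of_notMem hx Ff
      rw [h0, zero_mul]; exact zero_le
    by_cases hy : -y ∈ A
    swap
    · have h0 : g₁ y = 0 := indicator_of_notMem hy Ff
      rw [h0, mul_zero]; exact zero_le
    have hmidmem : (x + y) / 2 ∈ SA := by
      rw [hSA, mem_setOf_eq, hS, emb_mem_steiner_iff]
      exact ⟨x, -y, hx, hy, by ring⟩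
    have h1 : f₁ x = Ff x := indicator_of_mem hx Ff
    have h2 : g₁ y = Ff (-y) := indicator_of_mem hy Ff
    have h3 : h₁ ((x + y) / 2) = Ff ((x + y) / 2) := indicator_of_mem hmidmem Ff
    rw [h1, h2, h3]
    have h4 : Ff (-y) = Ff y := dens_flip_i i f hfu y w
    rw [h4]
    show dens f (emb i x w) * dens f (emb i y w) ≤ dens f (emb i ((x + y) / 2) w) ^ 2
    have hmid : emb i ((x + y) / 2) w = (2⁻¹ : ℝ) • (emb i x w + emb i y w) := by
      rw [emb_add, emb_smul]
      have e1 : (2⁻¹ : ℝ) * (x + y) = (x + y) / 2 := by ring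
      have e2 : (2⁻¹ : ℝ) • (w + w) = w := by
        funext j
        show (2:ℝ)⁻¹ * ((w + w) j) = w j
        rw [Pi.add_apply]
        ring
      rw [e1, e2]
    rw [hmid]
    exact dens_logconc f hf0 hflc (emb i x w) (emb i y w)
  have hpl := pl_one f₁ g₁ h₁ hf₁m hg₁m hh₁m hyp
  rw [hneg] at hpl
  exact ennreal_le_of_sq hpl

include hfm hf0 hflc hfu in
lemma dual (K : Set (E (m + 1))) (hsymm : ∀ x ∈ K, -x ∈ K)
    (hP₀m : MeasurableSet (polarBody K))
    (hP₁m : MeasurableSet (polarBody (steiner (EuclideanSpace.single i (1:ℝ)) K))) :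
    ∫⁻ x, ((polarBody K).indicator (dens f)) x ≤
      ∫⁻ x, ((polarBody (steiner (EuclideanSpace.single i (1:ℝ)) K)).indicator (dens f)) x := by
  set S := steiner (EuclideanSpace.single i (1:ℝ)) K with hS
  set P₀ := polarBody K with hP₀
  set P₁ := polarBody S with hP₁
  have hdm : Measurable (dens f) := ENNReal.measurable_ofReal.comp hfm
  rw [lint_split i _ (hdm.indicator hP₀m), lint_split i _ (hdm.indicator hP₁m)]
  apply lintegral_mono
  intro ζ
  have hembm : Measurable (fun w : Fin m → ℝ => emb i ζ w) :=
    (emb_measurable i).comp (measurable_const.prodMk measurable_id)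
  set Fw := fun w : Fin m → ℝ => dens f (emb i ζ w) with hFw
  have hFwm : Measurable Fw := hdm.comp hembm
  set D₀ := {w : Fin m → ℝ | emb i ζ w ∈ P₀} with hD₀
  set D₁ := {w : Fin m → ℝ | emb i ζ w ∈ P₁} with hD₁
  have hD₀m : MeasurableSet D₀ := hembm hP₀m
  have hD₁m : MeasurableSet D₁ := hembm hP₁m
  set f₂ := fun w : Fin m → ℝ => D₀.indicator Fw w with hf₂
  set g₂ := fun w : Fin m → ℝ => f₂ (-w) with hg₂
  set h₂ := fun w : Fin m → ℝ => D₁.indicator Fw w with hh₂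
  have hf₂m : Measurable f₂ := hFwm.indicator hD₀m
  have hg₂m : Measurable g₂ := hf₂m.comp measurable_neg
  have hh₂m : Measurable h₂ := hFwm.indicator hD₁m
  have hindP₀ : ∀ w, (P₀.indicator (dens f)) (emb i ζ w) = f₂ w := by
    intro w
    by_cases hw : emb i ζ w ∈ P₀
    · rw [indicator_of_mem hw]
      exact (indicator_of_mem (show w ∈ D₀ from hw) Fw).symm
    · rw [indicator_of_notMem hw]
      exact (indicator_of_notMem (show w ∉ D₀ from hw) Fw).symm
  have hindP₁ : ∀ w, (P₁.indicator (dens f)) (emb i ζ w) = h₂ w := by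
    intro w
    by_cases hw : emb i ζ w ∈ P₁
    · rw [indicator_of_mem hw]
      exact (indicator_of_mem (show w ∈ D₁ from hw) Fw).symm
    · rw [indicator_of_notMem hw]
      exact (indicator_of_notMem (show w ∉ D₁ from hw) Fw).symm
  show ∫⁻ w, (P₀.indicator (dens f)) (emb i ζ w) ≤ ∫⁻ w, (P₁.indicator (dens f)) (emb i ζ w)
  rw [lintegral_congr hindP₀, lintegral_congr hindP₁]
  have hneg : ∫⁻ w, g₂ w = ∫⁻ w, f₂ w := neg_mp.lintegral_comp hf₂m
  have hyp : ∀ w₁ w₂, f₂ w₁ * g₂ w₂ ≤ (h₂ ((2⁻¹ : ℝ) • (w₁ + w₂))) ^ 2 := by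
    intro w₁ w₂
    by_cases hw₁ : w₁ ∈ D₀
    swap
    · have h0 : f₂ w₁ = 0 := indicator_of_notMem hw₁ Fw
      rw [h0, zero_mul]; exact zero_le
    by_cases hw₂ : -w₂ ∈ D₀
    swap
    · have h0 : g₂ w₂ = 0 := indicator_of_notMem hw₂ Fw
      rw [h0, mul_zero]; exact zero_le
    -- the midpoint lies in the polar of the Steiner symmetral
    have hmidmem : (2⁻¹ : ℝ) • (w₁ + w₂) ∈ D₁ := by
      rw [hD₁, mem_setOf_eq, hP₁]
      intro x hx
      rw [hS, mem_steiner_iff] at hx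
      obtain ⟨s, t, hsK, htK, hxi⟩ := hx
      set v := proj i x with hv
      have hxe : x = emb i (x i) v := emb_surj i x
      rw [hxe, inner_emb]
      have hsum : ∑ j, v j * ((2⁻¹ : ℝ) • (w₁ + w₂)) j
          = 2⁻¹ * ((∑ j, v j * w₁ j) + ∑ j, v j * w₂ j) := by
        rw [mul_add, Finset.mul_sum, Finset.mul_sum, ← Finset.sum_add_distrib]
        apply Finset.sum_congr rfl
        intro j _
        rw [Pi.smul_apply, Pi.add_apply, smul_eq_mul]
        ring
      have hb₁ : s * ζ + ∑ j, v j * w₁ j ≤ 1 := by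
        have := hw₁ (emb i s v) hsK
        rwa [inner_emb] at this
      have hb₂ : (∑ j, v j * w₂ j) - t * ζ ≤ 1 := by
        have hmem : emb i (-t) (-v) ∈ K := by
          rw [← emb_neg]
          exact hsymm _ htK
        have := hw₂ (emb i (-t) (-v)) hmem
        rw [inner_emb] at this
        have hsum2 : ∑ j, (-v) j * (-w₂) j = ∑ j, v j * w₂ j := by
          apply Finset.sum_congr rfl
          intro j _
          rw [Pi.neg_apply, Pi.neg_apply]
          ring
        rw [hsum2] at this
        linarith
      rw [hsum, hxi]
      linarith
    have h1 : f₂ w₁ = Fw w₁ := indicator_of_mem hw₁ Fw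
    have h2 : g₂ w₂ = Fw (-w₂) := indicator_of_mem hw₂ Fw
    have h3 : h₂ ((2⁻¹ : ℝ) • (w₁ + w₂)) = Fw ((2⁻¹ : ℝ) • (w₁ + w₂)) :=
      indicator_of_mem hmidmem Fw
    rw [h1, h2, h3]
    have h4 : Fw (-w₂) = Fw w₂ := dens_flip_base i f hfu ζ w₂
    rw [h4]
    show dens f (emb i ζ w₁) * dens f (emb i ζ w₂)
      ≤ dens f (emb i ζ ((2⁻¹ : ℝ) • (w₁ + w₂))) ^ 2
    have hmid : emb i ζ ((2⁻¹ : ℝ) • (w₁ + w₂))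
        = (2⁻¹ : ℝ) • (emb i ζ w₁ + emb i ζ w₂) := by
      rw [emb_add, emb_smul]
      have e1 : (2⁻¹ : ℝ) * (ζ + ζ) = ζ := by ring
      rw [e1]
    rw [hmid]
    exact dens_logconc f hf0 hflc (emb i ζ w₁) (emb i ζ w₂)
  have hpl := pl_fin m f₂ g₂ h₂ hf₂m hg₂m hh₂m hyp
  rw [hneg] at hpl
  exact ennreal_le_of_sq hpl

end main

end BSAux

theorem blaschke_santalo_stmt (n : ℕ) (f : E n → ℝ) (hfm : Measurable f) (hf0 : ∀ x, 0 ≤ f x)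
    (hflc : ∀ x y : E n, ∀ t : ℝ, t ∈ Set.Icc (0 : ℝ) 1 →
      f x ^ (1 - t) * f y ^ t ≤ f ((1 - t) • x + t • y))
    (hfu : ∀ (x : E n) (ε : Fin n → ℝ), (∀ i, ε i = 1 ∨ ε i = -1) →
      f (WithLp.toLp 2 (fun i => ε i * x i) : E n) = f x)
    (μ : Measure (E n)) (hμ : μ = volume.withDensity fun x => ENNReal.ofReal (f x))
    (K : Set (E n)) (hK : IsConvexBody K) (hsym : K = -K)
    (i : Fin n) (u : E n) (hu : u = EuclideanSpace.single i (1 : ℝ)) :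
    μ K * μ (polarBody K) ≤ μ (steiner u K) * μ (polarBody (steiner u K)) := by
  subst hμ
  subst hu
  cases n with
  | zero => exact i.elim0
  | succ m =>
    have hKcomp : IsCompact K := hK.1
    have hKm : MeasurableSet K := hKcomp.isClosed.measurableSet
    have hScomp : IsCompact (steiner (EuclideanSpace.single i (1:ℝ)) K) :=
      BSAux.steiner_compact i K hKcomp
    have hSm : MeasurableSet (steiner (EuclideanSpace.single i (1:ℝ)) K) :=
      hScomp.isClosed.measurableSet
    have hP₀m : MeasurableSet (polarBody K) := (BSAux.polar_closed K).measurableSet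
    have hP₁m : MeasurableSet (polarBody (steiner (EuclideanSpace.single i (1:ℝ)) K)) :=
      (BSAux.polar_closed _).measurableSet
    have hsymm : ∀ x ∈ K, -x ∈ K := by
      intro x hx
      rw [hsym]
      exact Set.neg_mem_neg.mpr hx
    have happ : ∀ A : Set (E (m + 1)), MeasurableSet A →
        (volume.withDensity fun x => ENNReal.ofReal (f x)) A
          = ∫⁻ x, A.indicator (BSAux.dens f) x := by
      intro A hA
      rw [withDensity_apply _ hA, lintegral_indicator hA]
      rfl
    rw [happ K hKm, happ _ hP₀m, happ _ hSm, happ _ hP₁m]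
    exact mul_le_mul'
      (BSAux.primal i f hfm hf0 hflc hfu K hKm hSm)
      (BSAux.dual i f hfm hf0 hflc hfu K hsymm hP₀m hP₁m)
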